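/- arXiv:2201.00078 — 3 statements merged into one kernel-verified Lean document; each statement's English description precedes it below -/
import Mathlib

section
/- Let c = gcd(n,k) and l = n/c with l even. Then the set S consisting of u_0 together with all vertices v_{j+ik} for 0 ≤ j ≤ c−1 and 0 ≤ i ≤ l−1 with i odd is a P3-hull set of G(n,k) of cardinality n/2 + 1 = ⌈(n+1)/2⌉. -/
open SimpleGraph
open Fin.NatCast

def infectStep {V : Type*} (G : SimpleGraph V) (S : Set V) : Set V :=
  S ∪ {v | ∃ a b, a ≠ b ∧ a ∈ S ∧ b ∈ S ∧ G.Adj v a ∧ G.Adj v b}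

def infectIter {V : Type*} (G : SimpleGraph V) (S : Set V) : ℕ → Set V
  | 0 => S
  | p + 1 => infectStep G (infectIter G S p)

def IsHullSet {V : Type*} (G : SimpleGraph V) (S : Set V) : Prop :=
  ∃ p, infectIter G S p = Set.univ

noncomputable def hullNumber {V : Type*} (G : SimpleGraph V) : ℕ :=
  sInf {m | ∃ S : Set V, S.ncard = m ∧ IsHullSet G S}

noncomputable def infectTime {V : Type*} (G : SimpleGraph V) (S : Set V) : ℕ :=
  sInf {p | infectIter G S p = Set.univ}

def IsCubic {V : Type*} (G : SimpleGraph V) : Prop :=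
  ∀ v, {w | G.Adj v w}.ncard = 3

def IsDecyclingSet {V : Type*} (G : SimpleGraph V) (S : Set V) : Prop :=
  (G.induce Sᶜ).IsAcyclic

noncomputable def decyclingNumber {V : Type*} (G : SimpleGraph V) : ℕ :=
  sInf {m | ∃ S : Set V, S.ncard = m ∧ IsDecyclingSet G S}

def pHull {V : Type*} (G : SimpleGraph V) (S : Set V) : Set V :=
  ⋃ p, infectIter G S p

noncomputable def graphDiam {V : Type*} (G : SimpleGraph V) : ℕ :=
  sSup {d | ∃ a b, d = G.dist a b}

noncomputable def maxCompDiam {V : Type*} (G : SimpleGraph V) : ℕ :=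
  sSup {d | ∃ c : G.ConnectedComponent, d = graphDiam (G.induce c.supp)}

def genPetersen (n k : ℕ) [NeZero n] : SimpleGraph (Fin n ⊕ Fin n) :=
  SimpleGraph.fromRel fun x y =>
    match x, y with
    | Sum.inl i, Sum.inl j => j = i + 1
    | Sum.inl i, Sum.inr j => i = j
    | Sum.inr i, Sum.inr j => j = i + (k : Fin n)
    | _, _ => False

def Sv (n k : ℕ) [NeZero n] : Set (Fin n ⊕ Fin n) :=
  {x | ∃ i j : ℕ, i < n / Nat.gcd n k ∧ j < Nat.gcd n k ∧ Odd i ∧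
    x = Sum.inr ((j + i * k : ℕ) : Fin n)}

def SuOdd (n c : ℕ) [NeZero n] : Set (Fin n ⊕ Fin n) :=
  {Sum.inl ((c - 1 : ℕ) : Fin n)} ∪
    {x | ∃ j : ℕ, j < c ∧ Even j ∧ x = Sum.inl ((j : ℕ) : Fin n)}

-- helpers
lemma finCast_congr {n : ℕ} [NeZero n] {a b : ℕ} (h : a ≡ b [MOD n]) :
    ((a : Fin n) = (b : Fin n)) := by
  apply Fin.ext; simp only [Fin.val_natCast]; exact h

lemma subset_infectStep {V : Type*} (G : SimpleGraph V) (S : Set V) : S ⊆ infectStep G S :=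
  Set.subset_union_left

lemma infectIter_mono {V : Type*} (G : SimpleGraph V) (S : Set V) {p q : ℕ} (h : p ≤ q) :
    infectIter G S p ⊆ infectIter G S q := by
  induction q with
  | zero => simp [Nat.le_zero.mp h]
  | succ q ih =>
    rcases Nat.lt_or_ge p (q+1) with h' | h'
    · exact (ih (by omega)).trans (subset_infectStep G _)
    · have : p = q + 1 := by omega
      subst this; exact subset_rfl

lemma step_mem {V : Type*} {G : SimpleGraph V} {T : Set V} {x a b : V}
    (hab : a ≠ b) (ha : a ∈ T) (hb : b ∈ T) (h1 : G.Adj x a) (h2 : G.Adj x b) :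
    x ∈ infectStep G T :=
  Or.inr ⟨a, b, hab, ha, hb, h1, h2⟩

lemma gp_adj_uv (n k : ℕ) [NeZero n] (i : Fin n) :
    (genPetersen n k).Adj (Sum.inl i) (Sum.inr i) := by
  rw [genPetersen, SimpleGraph.fromRel_adj]
  exact ⟨by simp, Or.inl rfl⟩

lemma gp_adj_uu (n k : ℕ) [NeZero n] (hn : 2 ≤ n) (i : Fin n) :
    (genPetersen n k).Adj (Sum.inl i) (Sum.inl (i + 1)) := by
  rw [genPetersen, SimpleGraph.fromRel_adj]
  refine ⟨?_, Or.inl rfl⟩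
  simp only [ne_eq, Sum.inl.injEq]
  intro h
  have h1 : (1 : Fin n) = 0 := by
    have := left_eq_add.mp h
    exact this
  have : (1 : Fin n).val = (0 : Fin n).val := by rw [h1]
  simp [Fin.val_natCast, Nat.mod_eq_of_lt hn] at this

lemma gp_adj_vv (n k : ℕ) [NeZero n] (hk : (k : Fin n) ≠ 0) (i : Fin n) :
    (genPetersen n k).Adj (Sum.inr i) (Sum.inr (i + (k : Fin n))) := by
  rw [genPetersen, SimpleGraph.fromRel_adj]
  refine ⟨?_, Or.inl rfl⟩
  simp only [ne_eq, Sum.inr.injEq]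
  intro h
  exact hk (left_eq_add.mp h)

lemma key_inj (n k : ℕ) (hn : 0 < n) {i i' j j' : ℕ}
    (hi : i < n / Nat.gcd n k) (hi' : i' < n / Nat.gcd n k)
    (hj : j < Nat.gcd n k) (hj' : j' < Nat.gcd n k)
    (h : (j + i * k) ≡ (j' + i' * k) [MOD n]) : i = i' ∧ j = j' := by
  set c := Nat.gcd n k with hc_def
  have hc : 0 < c := Nat.gcd_pos_of_pos_left k hn
  obtain ⟨l, hnl⟩ := Nat.gcd_dvd_left n k
  obtain ⟨k', hkk⟩ := Nat.gcd_dvd_right n k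
  have hld : n / c = l := by rw [hnl]; exact Nat.mul_div_cancel_left l hc
  have hkd : k / c = k' := by rw [hkk]; exact Nat.mul_div_cancel_left k' hc
  have hcop : Nat.Coprime l k' := by
    have := Nat.coprime_div_gcd_div_gcd (m := n) (n := k) hc
    rwa [hld, hkd] at this
  rw [hld] at hi hi'
  -- j = j'
  have hjj : j = j' := by
    have h2 : (j + i * k) % c = (j' + i' * k) % c :=
      (Nat.ModEq.of_dvd ⟨l, hnl⟩ h)
    rw [hkk] at h2
    have e1 : j + i * (c * k') = j + (i * k') * c := by ring
    have e2 : j' + i' * (c * k') = j' + (i' * k') * c := by ring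
    rw [e1, e2, Nat.add_mul_mod_self_right, Nat.add_mul_mod_self_right] at h2
    rw [Nat.mod_eq_of_lt hj, Nat.mod_eq_of_lt hj'] at h2
    exact h2
  subst hjj
  have hik : i * k ≡ i' * k [MOD n] := Nat.ModEq.add_left_cancel' j h
  have main : ∀ a b : ℕ, a ≤ b → b < l → a * k ≡ b * k [MOD n] → a = b := by
    intro a b hab hbl hmod
    have hdvd : n ∣ b * k - a * k :=
      (Nat.modEq_iff_dvd' (Nat.mul_le_mul_right k hab)).mp hmod
    rw [← Nat.sub_mul] at hdvd
    have h3 : c * l ∣ c * ((b - a) * k') := by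
      rw [← hnl]
      have : (b - a) * k = c * ((b - a) * k') := by rw [hkk]; ring
      rwa [this] at hdvd
    have h4 : l ∣ (b - a) * k' := (mul_dvd_mul_iff_left hc.ne').mp h3
    have h5 : l ∣ b - a := hcop.dvd_of_dvd_mul_right h4
    rcases Nat.eq_zero_or_pos (b - a) with h0 | h0
    · omega
    · have := Nat.le_of_dvd h0 h5; omega
  rcases le_total i i' with hle | hle
  · exact ⟨main i i' hle hi' hik, rfl⟩
  · exact ⟨(main i' i hle hi hik.symm).symm, rfl⟩

lemma exists_rep (n k : ℕ) [NeZero n] (t : Fin n) :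
    ∃ i j : ℕ, i < n / Nat.gcd n k ∧ j < Nat.gcd n k ∧
      ((j + i * k : ℕ) : Fin n) = t := by
  have hn : 0 < n := Nat.pos_of_ne_zero (NeZero.ne n)
  set c := Nat.gcd n k with hc_def
  have hc : 0 < c := Nat.gcd_pos_of_pos_left k hn
  obtain ⟨l, hnl⟩ := Nat.gcd_dvd_left n k
  obtain ⟨k', hkk⟩ := Nat.gcd_dvd_right n k
  have hld : n / c = l := by rw [hnl]; exact Nat.mul_div_cancel_left l hc
  have hkd : k / c = k' := by rw [hkk]; exact Nat.mul_div_cancel_left k' hc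
  have hcop : Nat.Coprime l k' := by
    have := Nat.coprime_div_gcd_div_gcd (m := n) (n := k) hc
    rwa [hld, hkd] at this
  have hl0 : 0 < l := by
    rcases Nat.eq_zero_or_pos l with h | h
    · subst h; simp at hnl; omega
    · exact h
  haveI : NeZero l := ⟨hl0.ne'⟩
  set q := t.val / c with hq_def
  set j := t.val % c with hj_def
  have hql : q < l := by
    have h1 : t.val < c * l := by rw [← hnl]; exact t.isLt
    exact Nat.div_lt_of_lt_mul (by omega)
  set z : ZMod l := (q : ZMod l) * ((k' : ZMod l))⁻¹ with hz_def
  refine ⟨z.val, j, ?_, ?_, ?_⟩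
  · rw [hld]; exact ZMod.val_lt z
  · exact Nat.mod_lt _ hc
  · have hmod : z.val * k' ≡ q [MOD l] := by
      rw [← ZMod.natCast_eq_natCast_iff]
      push_cast
      rw [ZMod.natCast_zmod_val]
      rw [hz_def, mul_assoc, ZMod.inv_mul_of_unit, mul_one]
      exact (ZMod.unitOfCoprime k' hcop.symm).isUnit
    have hmod2 : j + z.val * k ≡ j + c * q [MOD n] := by
      apply Nat.ModEq.add_left
      have : c * (z.val * k') ≡ c * q [MOD c * l] := Nat.ModEq.mul_left' (c := c) hmod
      rw [← hnl] at this
      have e : z.val * k = c * (z.val * k') := by rw [hkk]; ring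
      rwa [e]
    have hjq : j + c * q = t.val := Nat.mod_add_div t.val c
    rw [hjq] at hmod2
    rw [finCast_congr hmod2]
    exact Fin.cast_val_eq_self t

theorem stmt6 (n k : ℕ) [NeZero n] (hk1 : 1 ≤ k) (hk2 : 2 * k < n)
    (hl : Even (n / Nat.gcd n k)) :
    IsHullSet (genPetersen n k) ({Sum.inl 0} ∪ Sv n k) ∧
    ({Sum.inl 0} ∪ Sv n k : Set (Fin n ⊕ Fin n)).ncard = n / 2 + 1 ∧
    n / 2 + 1 = (n + 2) / 2 := by
  have hn : 0 < n := by omega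
  have hn2 : 2 ≤ n := by omega
  set G := genPetersen n k with hG
  set S : Set (Fin n ⊕ Fin n) := {Sum.inl 0} ∪ Sv n k with hS
  set c := Nat.gcd n k with hc_def
  have hc : 0 < c := Nat.gcd_pos_of_pos_left k hn
  have hdn : c ∣ n := Nat.gcd_dvd_left n k
  have hdk : c ∣ k := Nat.gcd_dvd_right n k
  obtain ⟨l, hnl⟩ := hdn
  obtain ⟨k', hkk⟩ := hdk
  have hld : n / c = l := Nat.div_eq_of_eq_mul_left hc (by rw [hnl]; ring)
  have hle : Even l := by rwa [hld] at hl
  obtain ⟨l2, hl2⟩ := hle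
  have hl0 : 0 < l := by
    rcases Nat.eq_zero_or_pos l with h | h
    · subst h; simp at hnl; omega
    · exact h
  have hl2' : 2 ≤ l := by omega
  have hkn : k < n := by omega
  have hkFin : (k : Fin n) ≠ 0 := by
    intro h
    have := congrArg Fin.val h
    rw [Fin.val_natCast, Nat.mod_eq_of_lt hkn] at this
    simp at this; omega
  have hlk : ∀ j : ℕ, j + l * k ≡ j [MOD n] := by
    intro j
    have hdvd : n ∣ l * k := ⟨k', by rw [hkk, hnl]; ring⟩
    calc j + l * k ≡ j + 0 [MOD n] :=
          Nat.ModEq.add_left j (Nat.modEq_zero_iff_dvd.mpr hdvd)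
      _ = j := by omega
  -- all inner vertices infected after one step
  have step1 : ∀ t : Fin n, Sum.inr t ∈ infectIter G S 1 := by
    intro t
    obtain ⟨i, j, hi, hj, hrep⟩ := exists_rep n k t
    rw [← hc_def, hld] at hi
    rw [← hc_def] at hj
    rcases Nat.even_or_odd i with he | ho
    · obtain ⟨m, hm⟩ := he
      have hil : i + 1 < l := by omega
      have haS : Sum.inr (t + (k : Fin n)) ∈ S := by
        refine Or.inr ⟨i + 1, j, by rw [← hc_def, hld]; exact hil,
          by rw [← hc_def]; exact hj, ⟨m, by omega⟩, ?_⟩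
        rw [← hrep]
        congr 1
        have e : (j + (i+1)*k : ℕ) = (j + i*k) + k := by ring
        rw [e]
        push_cast
        ring
      have hbS : Sum.inr (t - (k : Fin n)) ∈ S := by
        rcases Nat.eq_zero_or_pos i with h0 | h0
        · refine Or.inr ⟨l - 1, j, by rw [← hc_def, hld]; omega,
            by rw [← hc_def]; exact hj, ⟨l2 - 1, by omega⟩, ?_⟩
          rw [← hrep]
          congr 1
          rw [sub_eq_iff_eq_add]
          have e1 : j + (l-1)*k + k = j + l*k := by
            have h1 : l - 1 + 1 = l := by omega
            have : (l-1)*k + k = ((l-1)+1)*k := by ring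
            rw [h1] at this
            omega
          have e2 : ((j + (l-1)*k : ℕ) : Fin n) + ((k:ℕ) : Fin n)
              = ((j + (l-1)*k + k : ℕ) : Fin n) := by push_cast; ring
          rw [e2, e1]
          subst h0
          exact (finCast_congr (by simpa using hlk j)).symm
        · refine Or.inr ⟨i - 1, j, by rw [← hc_def, hld]; omega,
            by rw [← hc_def]; exact hj, ⟨m - 1, by omega⟩, ?_⟩
          rw [← hrep]
          congr 1
          rw [sub_eq_iff_eq_add]
          have e1 : j + (i-1)*k + k = j + i*k := by
            have h1 : i - 1 + 1 = i := by omega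
            have : (i-1)*k + k = ((i-1)+1)*k := by ring
            rw [h1] at this
            omega
          have e2 : ((j + (i-1)*k : ℕ) : Fin n) + ((k:ℕ) : Fin n)
              = ((j + (i-1)*k + k : ℕ) : Fin n) := by push_cast; ring
          rw [e2, e1]
      have hab : (Sum.inr (t + (k:Fin n)) : Fin n ⊕ Fin n) ≠ Sum.inr (t - (k:Fin n)) := by
        intro h
        simp only [Sum.inr.injEq] at h
        have h2 : (k:Fin n) + (k:Fin n) = 0 := by
          have h3 : t + (k:Fin n) + (k:Fin n) = t := by
            rw [h, sub_add_cancel]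
          have h4 : t + ((k:Fin n) + (k:Fin n)) = t + 0 := by
            rw [add_zero, ← add_assoc]; exact h3
          exact add_left_cancel h4
        have h5 : ((k + k : ℕ) : Fin n) = ((0:ℕ) : Fin n) := by
          push_cast; rw [h2]
        have hv := congrArg Fin.val h5
        rw [Fin.val_natCast, Fin.val_natCast, Nat.mod_eq_of_lt (by omega : k + k < n)] at hv
        simp at hv
        omega
      have h1 : G.Adj (Sum.inr t) (Sum.inr (t + (k:Fin n))) := gp_adj_vv n k hkFin t
      have h2 : G.Adj (Sum.inr t) (Sum.inr (t - (k:Fin n))) := by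
        have := gp_adj_vv n k hkFin (t - (k:Fin n))
        rw [sub_add_cancel] at this
        exact this.symm
      exact step_mem hab haS hbS h1 h2
    · have hmem : Sum.inr t ∈ S :=
        Or.inr ⟨i, j, by rw [← hc_def, hld]; exact hi, by rw [← hc_def]; exact hj, ho, by rw [hrep]⟩
      exact infectIter_mono G S (by omega : 0 ≤ 1) hmem
  -- outer vertices
  have stepU : ∀ m : ℕ, m < n → Sum.inl ((m : ℕ) : Fin n) ∈ infectIter G S (m+1) := by
    intro m
    induction m with
    | zero =>
      intro _
      apply infectIter_mono G S (by omega : 0 ≤ 1)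
      left; simp
    | succ m ih =>
      intro hm
      have ha : Sum.inl ((m : ℕ) : Fin n) ∈ infectIter G S (m+1) := ih (by omega)
      have hb : Sum.inr (((m+1 : ℕ)) : Fin n) ∈ infectIter G S (m+1) :=
        infectIter_mono G S (by omega : 1 ≤ m+1) (step1 _)
      have hadj1 : G.Adj (Sum.inl ((m+1 : ℕ) : Fin n)) (Sum.inl ((m : ℕ) : Fin n)) := by
        have h := gp_adj_uu n k hn2 ((m : ℕ) : Fin n)
        have e : ((m : ℕ) : Fin n) + 1 = ((m+1 : ℕ) : Fin n) := by push_cast; ring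
        rw [e] at h
        exact h.symm
      have hadj2 : G.Adj (Sum.inl ((m+1 : ℕ) : Fin n)) (Sum.inr ((m+1 : ℕ) : Fin n)) :=
        gp_adj_uv n k _
      exact step_mem (by simp) ha hb hadj1 hadj2
  refine ⟨⟨n, ?_⟩, ?_, by omega⟩
  · apply Set.eq_univ_of_forall
    intro x
    cases x with
    | inl t =>
      have h := stepU t.val t.isLt
      rw [Fin.cast_val_eq_self] at h
      exact infectIter_mono G S (Nat.succ_le_of_lt t.isLt) h
    | inr t => exact infectIter_mono G S (by omega : 1 ≤ n) (step1 t)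
  · -- cardinality
    set F : Finset (Fin n ⊕ Fin n) :=
      (Finset.range l2 ×ˢ Finset.range c).image
        (fun p => Sum.inr ((p.2 + (2*p.1+1)*k : ℕ) : Fin n)) with hF_def
    have hSvF : Sv n k = ↑F := by
      ext x
      simp only [Sv, Set.mem_setOf_eq, hF_def, Finset.coe_image, Set.mem_image,
        Finset.mem_coe, Finset.mem_product, Finset.mem_range]
      constructor
      · rintro ⟨i, j, hi, hj, ⟨m, hm⟩, hx⟩
        rw [← hc_def, hld] at hi
        rw [← hc_def] at hj
        subst hm
        exact ⟨(m, j), ⟨by omega, hj⟩, hx.symm⟩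
      · rintro ⟨⟨m, j⟩, ⟨hm, hj⟩, rfl⟩
        exact ⟨2*m+1, j, by rw [← hc_def, hld]; omega, by rw [← hc_def]; omega,
          ⟨m, rfl⟩, rfl⟩
    have hcard : F.card = l2 * c := by
      rw [hF_def, Finset.card_image_of_injOn, Finset.card_product,
        Finset.card_range, Finset.card_range]
      intro p hp q hq hpq
      simp only [Finset.mem_coe, Finset.mem_product, Finset.mem_range] at hp hq
      simp only [Sum.inr.injEq] at hpq
      have hmod : (p.2 + (2*p.1+1)*k) ≡ (q.2 + (2*q.1+1)*k) [MOD n] := by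
        have hv := congrArg Fin.val hpq
        rw [Fin.val_natCast, Fin.val_natCast] at hv
        exact hv
      have hk1' : 2*p.1+1 < n / Nat.gcd n k := by rw [← hc_def, hld]; omega
      have hk2' : 2*q.1+1 < n / Nat.gcd n k := by rw [← hc_def, hld]; omega
      have hj1' : p.2 < Nat.gcd n k := by rw [← hc_def]; omega
      have hj2' : q.2 < Nat.gcd n k := by rw [← hc_def]; omega
      obtain ⟨h1, h2⟩ := key_inj n k hn hk1' hk2' hj1' hj2' hmod
      exact Prod.ext (by omega) h2
    have hdisj : Disjoint ({Sum.inl 0} : Set (Fin n ⊕ Fin n)) (Sv n k) := by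
      rw [Set.disjoint_left]
      rintro x hx hx'
      obtain ⟨i, j, _, _, _, rfl⟩ := hx'
      simp at hx
    have hfin : (Sv n k).Finite := by rw [hSvF]; exact Finset.finite_toSet F
    have hU : ({Sum.inl 0} ∪ Sv n k : Set (Fin n ⊕ Fin n)).ncard = 1 + l2 * c := by
      rw [Set.ncard_union_eq hdisj (Set.finite_singleton _) hfin, Set.ncard_singleton,
        hSvF, Set.ncard_coe_finset, hcard]
    have hhalf : n / 2 = l2 * c := by
      have he : n = 2 * (l2 * c) := by rw [hnl, hl2]; ring
      rw [he]
      exact Nat.mul_div_cancel_left _ (by norm_num)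
    have hU' : S.ncard = 1 + l2 * c := hU
    omega
end

section
/- For the explicit minimum size P3-hull set S of G(n,k) from the even case (l = n/(gcd(n,k)) even), the infecting time of S is n/2. -/
open SimpleGraph
open Fin.NatCast

namespace Stmt11Aux

open Sum

variable {n k : ℕ} [NeZero n]

lemma natCast_fin_eq {a b : ℕ} (h : a ≡ b [MOD n]) : (a : Fin n) = (b : Fin n) := by
  apply Fin.val_injective
  simpa [Fin.val_natCast, Nat.ModEq] using h

lemma fin_val_one (h2 : 2 ≤ n) : (1 : Fin n).val = 1 := by
  rw [Fin.val_one']; exact Nat.mod_eq_of_lt (by omega)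

lemma fin_val_add_one {m : Fin n} (h : m.val + 1 < n) : (m + 1).val = m.val + 1 := by
  have h2 : 2 ≤ n := by omega
  rw [Fin.add_def, fin_val_one h2]
  show (m.val + 1) % n = m.val + 1
  exact Nat.mod_eq_of_lt h

lemma fin_val_sub_one {m : Fin n} (h : 0 < m.val) : (m - 1).val = m.val - 1 := by
  have hm := m.isLt
  have h2 : 2 ≤ n := by omega
  rw [Fin.sub_def, fin_val_one h2]
  show (n - 1 + m.val) % n = m.val - 1
  have : n - 1 + m.val = (m.val - 1) + n := by omega
  rw [this, Nat.add_mod_right]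
  exact Nat.mod_eq_of_lt (by omega)

/-- Forward adjacency from an outer vertex. -/
lemma adj_inl_elim {m : Fin n} {z : Fin n ⊕ Fin n}
    (h : (genPetersen n k).Adj (Sum.inl m) z) :
    z = Sum.inl (m + 1) ∨ z = Sum.inl (m - 1) ∨ z = Sum.inr m := by
  rw [genPetersen, SimpleGraph.fromRel_adj] at h
  obtain ⟨-, h⟩ := h
  cases z with
  | inl j =>
    simp only at h
    rcases h with h | h
    · left; rw [h]
    · right; left; rw [h]; congr 1; exact (add_sub_cancel_right j 1).symm
  | inr j =>
    simp only at h
    rcases h with h | h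
    · right; right; rw [h]
    · exact absurd h not_false

lemma adj_uu (hn : 2 ≤ n) (m : Fin n) : (genPetersen n k).Adj (Sum.inl m) (Sum.inl (m + 1)) := by
  rw [genPetersen, SimpleGraph.fromRel_adj]
  refine ⟨?_, Or.inl rfl⟩
  intro h
  have hm : m = m + 1 := by injection h
  have hv := congrArg Fin.val hm
  rw [Fin.add_def, fin_val_one hn] at hv
  have hmlt := m.isLt
  have hv' : m.val = (m.val + 1) % n := hv
  rcases Nat.lt_or_ge (m.val + 1) n with hlt | hge
  · rw [Nat.mod_eq_of_lt hlt] at hv'; omega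
  · have hn1 : m.val + 1 = n := by omega
    rw [hn1, Nat.mod_self] at hv'
    omega

lemma adj_uv (m : Fin n) : (genPetersen n k).Adj (Sum.inl m) (Sum.inr m) := by
  rw [genPetersen, SimpleGraph.fromRel_adj]
  exact ⟨by simp, Or.inl rfl⟩

lemma adj_vv (hk : (k : Fin n) ≠ 0) (m : Fin n) :
    (genPetersen n k).Adj (Sum.inr m) (Sum.inr (m + k)) := by
  rw [genPetersen, SimpleGraph.fromRel_adj]
  refine ⟨?_, Or.inl rfl⟩
  intro h
  have hm : m = m + k := by injection h
  exact hk (add_left_cancel (a := m) (by rw [add_zero]; exact hm.symm))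

section NumberTheory

/-- Packaged arithmetic setup for the even case. -/
lemma setup (hk1 : 1 ≤ k) (hl : Even (n / Nat.gcd n k)) :
    ∃ c l k', Nat.gcd n k = c ∧ 0 < c ∧ n = c * l ∧ k = c * k' ∧
      Nat.Coprime k' l ∧ Even l ∧ 2 ≤ l ∧ Odd k' := by
  have hn := NeZero.pos n
  have hcpos : 0 < Nat.gcd n k := Nat.gcd_pos_of_pos_left k hn
  refine ⟨Nat.gcd n k, n / Nat.gcd n k, k / Nat.gcd n k, rfl, hcpos,
    (Nat.mul_div_cancel' (Nat.gcd_dvd_left n k)).symm,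
    (Nat.mul_div_cancel' (Nat.gcd_dvd_right n k)).symm,
    (Nat.coprime_div_gcd_div_gcd hcpos).symm, hl, ?_, ?_⟩
  · have h1 : 0 < n / Nat.gcd n k :=
      Nat.div_pos (Nat.le_of_dvd hn (Nat.gcd_dvd_left n k)) hcpos
    rcases hl with ⟨r, hr⟩; omega
  · rcases Nat.even_or_odd (k / Nat.gcd n k) with he | ho
    · exfalso
      have hc : Nat.gcd (k / Nat.gcd n k) (n / Nat.gcd n k) = 1 :=
        (Nat.coprime_div_gcd_div_gcd hcpos).symm
      have h2 : (2 : ℕ) ∣ Nat.gcd (k / Nat.gcd n k) (n / Nat.gcd n k) :=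
        Nat.dvd_gcd he.two_dvd hl.two_dvd
      rw [hc] at h2; omega
    · exact ho

/-- Membership in `Sv` from any representation with odd `i`. -/
lemma mem_Sv_of_odd {c l k' : ℕ} (hgcd : Nat.gcd n k = c) (hnl : n = c * l)
    (hkk : k = c * k') (hl2 : 2 ≤ l) (hle : Even l)
    {i j : ℕ} (hj : j < c) (hi : Odd i) :
    Sum.inr ((j + i * k : ℕ) : Fin n) ∈ Sv n k := by
  have hld : n / Nat.gcd n k = l := by
    rw [hgcd, hnl]; exact Nat.mul_div_cancel_left l (by omega)
  refine ⟨i % l, j, ?_, by rw [hgcd]; exact hj, ?_, ?_⟩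
  · rw [hld]; exact Nat.mod_lt _ (by omega)
  · -- Odd (i % l)
    obtain ⟨r, hr⟩ := hle
    have hmd : i % l + l * (i / l) = i := Nat.mod_add_div i l
    have hev : l * (i / l) = 2 * (r * (i / l)) := by rw [hr]; ring
    rcases hi with ⟨s, hs⟩
    rcases Nat.even_or_odd (i % l) with he | ho
    · exfalso; rcases he with ⟨u, hu⟩; omega
    · exact ho
  · congr 1
    apply natCast_fin_eq
    have hsplit : j + i * k = (j + i % l * k) + n * (k' * (i / l)) := by
      conv_lhs => rw [← Nat.mod_add_div i l]
      rw [hkk, hnl]; ring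
    unfold Nat.ModEq
    rw [hsplit, Nat.add_mul_mod_self_left]

/-- Any representation of an `Sv` element has odd `i`. -/
lemma odd_of_mem_Sv {c l k' : ℕ} (hgcd : Nat.gcd n k = c) (hnl : n = c * l)
    (hkk : k = c * k') (hcop : Nat.Coprime k' l) (hl2 : 2 ≤ l) (hle : Even l)
    {i j : ℕ} (hj : j < c)
    (h : Sum.inr ((j + i * k : ℕ) : Fin n) ∈ Sv n k) : Odd i := by
  obtain ⟨i', j', hi', hj', hodd, heq⟩ := h
  have hld : n / Nat.gcd n k = l := by
    rw [hgcd, hnl]; exact Nat.mul_div_cancel_left l (by omega)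
  rw [hld] at hi'
  rw [hgcd] at hj'
  have heq2 : ((j + i * k : ℕ) : Fin n) = ((j' + i' * k : ℕ) : Fin n) := by
    injection heq
  have hmod : (j + i * k) ≡ (j' + i' * k) [MOD n] := by
    have hv := congrArg Fin.val heq2
    rw [Fin.val_natCast, Fin.val_natCast] at hv
    exact hv
  have hcpos : 0 < c := by omega
  -- reduce mod c : j ≡ j' [MOD c]
  have hmodc : (j + i * k) ≡ (j' + i' * k) [MOD c] :=
    hmod.of_dvd (by rw [hnl]; exact Dvd.intro l rfl)
  have hjj : j ≡ j' [MOD c] := by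
    have h1 : (j + i * k) ≡ (j + 0) [MOD c] := by
      apply Nat.ModEq.add_left
      rw [hkk]
      exact (Nat.modEq_zero_iff_dvd.mpr ⟨k' * i, by ring⟩)
    have h2 : (j' + i' * k) ≡ (j' + 0) [MOD c] := by
      apply Nat.ModEq.add_left
      rw [hkk]
      exact (Nat.modEq_zero_iff_dvd.mpr ⟨k' * i', by ring⟩)
    simpa using (h1.symm.trans hmodc).trans h2
  have hjeq : j = j' := by
    have := Nat.ModEq.eq_of_lt_of_lt hjj hj hj'
    exact this
  subst hjeq
  have hik : i * k ≡ i' * k [MOD n] := (Nat.ModEq.add_left_cancel' j hmod)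
  -- cancel c then k'
  have hik2 : i * k' ≡ i' * k' [MOD l] := by
    have : c * (i * k') ≡ c * (i' * k') [MOD c * l] := by
      have e1 : c * (i * k') = i * k := by rw [hkk]; ring
      have e2 : c * (i' * k') = i' * k := by rw [hkk]; ring
      rw [e1, e2, ← hnl]; exact hik
    exact Nat.ModEq.mul_left_cancel' (by omega) this
  have hii : i ≡ i' [MOD l] := Nat.ModEq.cancel_right_of_coprime (by
    rwa [Nat.coprime_comm] at hcop) hik2
  -- same parity
  obtain ⟨r, hr⟩ := hle
  have hmm : i % l = i' % l := hii
  have m1 : i % l + l * (i / l) = i := Nat.mod_add_div i l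
  have m2 : i' % l + l * (i' / l) = i' := Nat.mod_add_div i' l
  have e1 : l * (i / l) = 2 * (r * (i / l)) := by rw [hr]; ring
  have e2 : l * (i' / l) = 2 * (r * (i' / l)) := by rw [hr]; ring
  rcases hodd with ⟨s, hs⟩
  rcases Nat.even_or_odd i with ⟨u, hu⟩ | ho
  · exfalso; omega
  · exact ho

/-- Every vertex index has a representation `j + i*k` with `j < c`. -/
lemma repr_exists {c l k' : ℕ} (hgcd : Nat.gcd n k = c) (hnl : n = c * l)
    (hkk : k = c * k') (hcop : Nat.Coprime k' l) (hl2 : 2 ≤ l) (m : Fin n) :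
    ∃ i j : ℕ, j < c ∧ m = ((j + i * k : ℕ) : Fin n) := by
  have hcpos : 0 < c := by
    rcases Nat.eq_zero_or_pos c with h | h
    · exfalso; have hn := NeZero.pos n; rw [h, zero_mul] at hnl; omega
    · exact h
  obtain ⟨a, -, ha⟩ := Nat.exists_mul_mod_eq_one_of_coprime hcop (by omega)
  set t := m.val / c with ht
  set j := m.val % c with hjdef
  refine ⟨a * t, j, Nat.mod_lt _ hcpos, ?_⟩
  have hjt : j + c * t = m.val := Nat.mod_add_div m.val c
  -- k' * (a * t) ≡ t [MOD l]
  have h1 : k' * (a * t) ≡ 1 * t [MOD l] := by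
    have : k' * a ≡ 1 [MOD l] := by
      unfold Nat.ModEq
      rw [ha]
      exact (Nat.mod_eq_of_lt (by omega)).symm
    calc k' * (a * t) = (k' * a) * t := by ring
      _ ≡ 1 * t [MOD l] := Nat.ModEq.mul_right t this
  have h2 : c * (k' * (a * t)) ≡ c * (1 * t) [MOD c * l] := Nat.ModEq.mul_left' c h1
  have h3 : (a * t) * k ≡ c * t [MOD n] := by
    have e1 : c * (k' * (a * t)) = (a * t) * k := by rw [hkk]; ring
    have e2 : c * (1 * t) = c * t := by ring
    rw [e1, e2, ← hnl] at h2
    exact h2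
  have h4 : (j + (a * t) * k) ≡ m.val [MOD n] := by
    calc j + (a * t) * k ≡ j + c * t [MOD n] := Nat.ModEq.add_left j h3
      _ = m.val := hjt
  conv_lhs => rw [← Fin.cast_val_eq_self m]
  exact (natCast_fin_eq h4).symm

/-- `v_{n-1}` is in `Sv`. -/
lemma last_mem_Sv (hk1 : 1 ≤ k) (hl : Even (n / Nat.gcd n k)) :
    Sum.inr ((n - 1 : ℕ) : Fin n) ∈ Sv n k := by
  obtain ⟨c, l, k', hgcd, hcpos, hnl, hkk, hcop, hle, hl2, hk'odd⟩ := setup hk1 hl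
  obtain ⟨a, -, ha⟩ := Nat.exists_mul_mod_eq_one_of_coprime hcop (by omega)
  set i0 := a * (l - 1) with hi0
  have hmod : k' * i0 % l = l - 1 := by
    have h1 : k' * i0 = (k' * a) * (l - 1) := by rw [hi0]; ring
    rw [h1, Nat.mul_mod, ha, Nat.one_mul,
      Nat.mod_eq_of_lt (show l - 1 < l by omega),
      Nat.mod_eq_of_lt (show l - 1 < l by omega)]
  have hdecomp : k' * i0 = l * (k' * i0 / l) + (l - 1) := by
    conv_lhs => rw [← Nat.div_add_mod (k' * i0) l]
    rw [hmod]
  have hoddki : Odd (k' * i0) := by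
    obtain ⟨r, hr⟩ := hle
    have e1 : l * (k' * i0 / l) = 2 * (r * (k' * i0 / l)) := by rw [hr]; ring
    refine ⟨r * (k' * i0 / l) + (l-1)/2, by omega⟩
  have hi0odd : Odd i0 := (Nat.odd_mul.mp hoddki).2
  have hmem := mem_Sv_of_odd (n := n) (k := k) hgcd hnl hkk hl2 hle
    (i := i0) (j := c - 1) (by omega) hi0odd
  have hcast : ((c - 1) + i0 * k : ℕ) = ((c-1) + i0*k : ℕ) := rfl
  have hfin : (((c - 1) + i0 * k : ℕ) : Fin n) = ((n - 1 : ℕ) : Fin n) := by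
    apply natCast_fin_eq
    have he : (c - 1) + i0 * k = n * (k' * i0 / l) + (n - 1) := by
      have h5 : i0 * k = c * (k' * i0) := by rw [hkk]; ring
      have h6 : c * (k' * i0) = n * (k' * i0 / l) + c * (l - 1) := by
        conv_lhs => rw [hdecomp]
        rw [hnl]; ring
      have hcl : c * (l - 1) + c = n := by
        rw [hnl, ← Nat.mul_succ]
        congr 1
        omega
      omega
    unfold Nat.ModEq
    rw [he, Nat.mul_add_mod]
  rwa [hfin] at hmem

end NumberTheory



section Infection

lemma subset_infectStep {V : Type*} (G : SimpleGraph V) (S : Set V) : S ⊆ infectStep G S :=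
  Set.subset_union_left

lemma mem_infectStep_of {V : Type*} {G : SimpleGraph V} {S : Set V} {v a b : V}
    (hab : a ≠ b) (ha : a ∈ S) (hb : b ∈ S) (h1 : G.Adj v a) (h2 : G.Adj v b) :
    v ∈ infectStep G S :=
  Set.mem_union_right _ ⟨a, b, hab, ha, hb, h1, h2⟩

lemma infectIter_succ_subset {V : Type*} (G : SimpleGraph V) (S : Set V) (p : ℕ) :
    infectIter G S p ⊆ infectIter G S (p + 1) :=
  subset_infectStep G _

lemma infectIter_mono {V : Type*} (G : SimpleGraph V) (S : Set V) {p q : ℕ} (h : p ≤ q) :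
    infectIter G S p ⊆ infectIter G S q := by
  induction q with
  | zero => rw [Nat.le_zero.mp h]
  | succ q ih =>
    rcases Nat.lt_or_ge p (q + 1) with hlt | hge
    · exact (ih (by omega)).trans (infectIter_succ_subset G S q)
    · have : p = q + 1 := by omega
      rw [this]

variable (hk1 : 1 ≤ k) (hk2 : 2 * k < n)

include hk1 hk2 in
lemma kcast_ne : (k : Fin n) ≠ 0 := by
  intro h
  have hv := congrArg Fin.val h
  rw [Fin.val_natCast, Nat.mod_eq_of_lt (by omega), Fin.val_zero] at hv
  omega

include hk1 hk2 in
lemma inner_one (hl : Even (n / Nat.gcd n k)) (m : Fin n) :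
    Sum.inr m ∈ infectIter (genPetersen n k) ({Sum.inl 0} ∪ Sv n k) 1 := by
  obtain ⟨c, l, k', hgcd, hcpos, hnl, hkk, hcop, hle, hl2, hk'odd⟩ := setup hk1 hl
  obtain ⟨i, j, hj, hm⟩ := repr_exists hgcd hnl hkk hcop hl2 m
  show Sum.inr m ∈ infectStep (genPetersen n k) (infectIter (genPetersen n k) _ 0)
  rcases Nat.even_or_odd i with he | ho
  · -- i even : both inner neighbors are in Sv
    have hkne := kcast_ne (n := n) (k := k) hk1 hk2
    have hlk : l * k = n * k' := by rw [hkk, hnl]; ring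
    have ea : ((j + (i + 1) * k : ℕ) : Fin n) = m + (k : Fin n) := by
      have e1 : j + (i + 1) * k = (j + i * k) + k := by ring
      rw [e1, Nat.cast_add, ← hm]
    have eb : ((j + (i + (l - 1)) * k : ℕ) : Fin n) = m - (k : Fin n) := by
      have hsum : ((j + (i + (l - 1)) * k : ℕ) : Fin n) + (k : Fin n) = m := by
        rw [← Nat.cast_add]
        have e2 : j + (i + (l - 1)) * k + k = j + (i + l) * k := by
          have h1 : i + (l - 1) + 1 = i + l := by omega
          calc j + (i + (l - 1)) * k + k = j + (i + (l - 1) + 1) * k := by ring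
            _ = j + (i + l) * k := by rw [h1]
        rw [e2, hm]
        apply natCast_fin_eq
        have e3 : j + (i + l) * k = (j + i * k) + n * k' := by
          rw [← hlk]; ring
        unfold Nat.ModEq
        rw [e3, Nat.add_mul_mod_self_left]
      exact eq_sub_of_add_eq hsum
    have hodd1 : Odd (i + 1) := Even.add_one he
    have hoddl : Odd (l - 1) := by
      obtain ⟨r, hr⟩ := hle
      exact ⟨r - 1, by omega⟩
    have hodd2 : Odd (i + (l - 1)) := Even.add_odd he hoddl
    have hmema : Sum.inr (m + (k : Fin n)) ∈ Sv n k := by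
      rw [← ea]; exact mem_Sv_of_odd hgcd hnl hkk hl2 hle hj hodd1
    have hmemb : Sum.inr (m - (k : Fin n)) ∈ Sv n k := by
      rw [← eb]; exact mem_Sv_of_odd hgcd hnl hkk hl2 hle hj hodd2
    have hab : (Sum.inr (m + (k : Fin n)) : Fin n ⊕ Fin n) ≠ Sum.inr (m - (k : Fin n)) := by
      intro h
      have h2 : m + (k : Fin n) = m - (k : Fin n) := by injection h
      have h3 : m + (k : Fin n) + (k : Fin n) = m := by rw [h2]; exact sub_add_cancel m _
      have h4 : ((k + k : ℕ) : Fin n) = 0 := by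
        rw [Nat.cast_add]
        exact add_left_cancel (a := m) (by rw [add_zero, ← add_assoc]; exact h3)
      have hv := congrArg Fin.val h4
      rw [Fin.val_natCast, Nat.mod_eq_of_lt (by omega)] at hv
      have : (0 : Fin n).val = 0 := rfl
      omega
    refine mem_infectStep_of hab ?_ ?_ ?_ ?_
    · exact Set.mem_union_right _ hmema
    · exact Set.mem_union_right _ hmemb
    · exact adj_vv hkne m
    · have := (adj_vv hkne (m - (k : Fin n))).symm
      rwa [sub_add_cancel] at this
  · -- i odd : already in Sv
    apply subset_infectStep
    exact Set.mem_union_right _ (hm ▸ mem_Sv_of_odd hgcd hnl hkk hl2 hle hj ho)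

include hk1 hk2 in
lemma outer_upper (hl : Even (n / Nat.gcd n k)) :
    ∀ t (m : Fin n), (m.val + 1 ≤ t ∨ n ≤ m.val + t) →
      Sum.inl m ∈ infectIter (genPetersen n k) ({Sum.inl 0} ∪ Sv n k) t := by
  have hn3 : 3 ≤ n := by omega
  intro t
  induction t with
  | zero =>
    intro m hm
    exfalso
    have := m.isLt
    omega
  | succ t ih =>
    intro m hm
    by_cases hprev : m.val + 1 ≤ t ∨ n ≤ m.val + t
    · exact infectIter_succ_subset _ _ t (ih m hprev)
    · push_neg at hprev
      obtain ⟨hp1, hp2⟩ := hprev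
      have hmlt := m.isLt
      show Sum.inl m ∈ infectStep (genPetersen n k) (infectIter (genPetersen n k) _ t)
      rcases Nat.eq_zero_or_pos t with ht0 | htpos
      · subst ht0
        rcases hm with h1 | h2
        · -- m = 0
          have hm0 : m = 0 := by
            apply Fin.val_injective
            have : (0 : Fin n).val = 0 := rfl
            omega
          apply subset_infectStep
          rw [hm0]
          exact Set.mem_union_left _ rfl
        · -- m.val = n - 1
          have hmval : m.val = n - 1 := by omega
          have hm1 : m + 1 = 0 := by
            apply Fin.val_injective
            rw [Fin.add_def, fin_val_one (by omega), hmval]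
            show (n - 1 + 1) % n = (0 : Fin n).val
            have : n - 1 + 1 = n := by omega
            rw [this, Nat.mod_self]
            rfl
          have hmcast : m = ((n - 1 : ℕ) : Fin n) := by
            apply Fin.val_injective
            rw [Fin.val_natCast, Nat.mod_eq_of_lt (by omega), hmval]
          refine mem_infectStep_of (a := Sum.inl (m + 1)) (b := Sum.inr m)
            (by simp) ?_ ?_ (adj_uu (by omega) m) (adj_uv m)
          · rw [hm1]
            exact Set.mem_union_left _ rfl
          · rw [hmcast]
            exact Set.mem_union_right _ (last_mem_Sv hk1 hl)
      · -- t ≥ 1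
        have hinner : Sum.inr m ∈ infectIter (genPetersen n k) ({Sum.inl 0} ∪ Sv n k) t :=
          infectIter_mono _ _ htpos (inner_one hk1 hk2 hl m)
        rcases hm with h1 | h2
        · -- m.val = t
          have hmval : m.val = t := by omega
          have hsub : (m - 1).val = m.val - 1 := fin_val_sub_one (by omega)
          have ha : Sum.inl (m - 1) ∈ infectIter (genPetersen n k) ({Sum.inl 0} ∪ Sv n k) t :=
            ih (m - 1) (Or.inl (by omega))
          have hadj : (genPetersen n k).Adj (Sum.inl m) (Sum.inl (m - 1)) := by
            have := (adj_uu (n := n) (k := k) (by omega) (m - 1)).symm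
            rwa [sub_add_cancel] at this
          exact mem_infectStep_of (by simp) ha hinner hadj (adj_uv m)
        · -- m.val = n - t - 1
          have hmval : m.val = n - t - 1 := by omega
          have hadd : (m + 1).val = m.val + 1 := fin_val_add_one (by omega)
          have ha : Sum.inl (m + 1) ∈ infectIter (genPetersen n k) ({Sum.inl 0} ∪ Sv n k) t :=
            ih (m + 1) (Or.inr (by omega))
          exact mem_infectStep_of (by simp) ha hinner (adj_uu (by omega) m) (adj_uv m)

include hk1 hk2 in
lemma upper_total (hl : Even (n / Nat.gcd n k)) :
    infectIter (genPetersen n k) ({Sum.inl 0} ∪ Sv n k) (n / 2) = Set.univ := by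
  obtain ⟨c, l, k', hgcd, hcpos, hnl, hkk, hcop, hle, hl2, hk'odd⟩ := setup hk1 hl
  have hn2 : n % 2 = 0 := by
    obtain ⟨r, hr⟩ := hle
    have : n = 2 * (c * r) := by rw [hnl, hr]; ring
    omega
  have hn3 : 3 ≤ n := by omega
  ext x
  simp only [Set.mem_univ, iff_true]
  cases x with
  | inl m =>
    have hmlt := m.isLt
    exact outer_upper hk1 hk2 hl (n / 2) m (by omega)
  | inr m =>
    exact infectIter_mono _ _ (by omega) (inner_one hk1 hk2 hl m)

/-- Upper-bound region for the infection at time `t`. -/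
def Bset (n : ℕ) [NeZero n] (t : ℕ) : Set (Fin n ⊕ Fin n) :=
  {x | ∃ y : Fin n, x = Sum.inr y ∨ (x = Sum.inl y ∧ (y.val ≤ t ∨ n ≤ y.val + t))}

include hk1 hk2 in
lemma iter_subset_B : ∀ t, infectIter (genPetersen n k) ({Sum.inl 0} ∪ Sv n k) t ⊆ Bset n t := by
  intro t
  induction t with
  | zero =>
    rintro x (hx | hx)
    · rw [Set.mem_singleton_iff] at hx
      exact ⟨0, Or.inr ⟨hx, Or.inl (Nat.le_of_eq (Fin.val_zero n))⟩⟩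
    · obtain ⟨i, j, _, _, _, hxe⟩ := hx
      exact ⟨_, Or.inl hxe⟩
  | succ t ih =>
    rintro x (hx | ⟨a, b, hab, ha, hb, h1, h2⟩)
    · obtain ⟨y, hy | ⟨hy, hcond⟩⟩ := ih hx
      · exact ⟨y, Or.inl hy⟩
      · exact ⟨y, Or.inr ⟨hy, by omega⟩⟩
    · cases x with
      | inr m => exact ⟨m, Or.inl rfl⟩
      | inl m =>
        by_contra hcon
        have hnot : ¬ (m.val ≤ t + 1 ∨ n ≤ m.val + (t + 1)) := by
          intro hc
          exact hcon ⟨m, Or.inr ⟨rfl, hc⟩⟩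
        push_neg at hnot
        obtain ⟨hq1, hq2⟩ := hnot
        have hmlt := m.isLt
        have hadd : (m + 1).val = m.val + 1 := fin_val_add_one (by omega)
        have hsub : (m - 1).val = m.val - 1 := fin_val_sub_one (by omega)
        have key : ∀ z, z = Sum.inl (m + 1) ∨ z = Sum.inl (m - 1) ∨ z = Sum.inr m →
            z ∈ Bset n t → z = Sum.inr m := by
          rintro z (rfl | rfl | rfl) hz
          · obtain ⟨y, hy | ⟨hy, hcond⟩⟩ := hz
            · exact absurd hy (by simp)
            · have hy2 : y = m + 1 := by
                have := Sum.inl.inj hy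
                exact this.symm
              subst hy2
              omega
          · obtain ⟨y, hy | ⟨hy, hcond⟩⟩ := hz
            · exact absurd hy (by simp)
            · have hy2 : y = m - 1 := by
                have := Sum.inl.inj hy
                exact this.symm
              subst hy2
              omega
          · rfl
        have hA : a = Sum.inr m := key a (adj_inl_elim h1) (ih ha)
        have hB : b = Sum.inr m := key b (adj_inl_elim h2) (ih hb)
        exact hab (hA.trans hB.symm)

end Infection

end Stmt11Aux

theorem stmt11 (n k : ℕ) [NeZero n] (hk1 : 1 ≤ k) (hk2 : 2 * k < n)
    (hl : Even (n / Nat.gcd n k)) :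
    infectTime (genPetersen n k) ({Sum.inl 0} ∪ Sv n k) = n / 2 := by
  have hn3 : 3 ≤ n := by omega
  obtain ⟨c, l, k', hgcd, hcpos, hnl, hkk, hcop, hle, hl2, hk'odd⟩ := Stmt11Aux.setup hk1 hl
  have hn2 : n % 2 = 0 := by
    obtain ⟨r, hr⟩ := hle
    have : n = 2 * (c * r) := by rw [hnl, hr]; ring
    omega
  have hupper := Stmt11Aux.upper_total hk1 hk2 hl
  have hlow : ∀ t, t < n / 2 →
      infectIter (genPetersen n k) ({Sum.inl 0} ∪ Sv n k) t ≠ Set.univ := by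
    intro t ht hcontra
    have hx : (Sum.inl (⟨n / 2, by omega⟩ : Fin n) : Fin n ⊕ Fin n) ∈
        infectIter (genPetersen n k) ({Sum.inl 0} ∪ Sv n k) t := by
      rw [hcontra]; trivial
    have hB := Stmt11Aux.iter_subset_B hk1 hk2 t hx
    obtain ⟨y, hy | ⟨hy, hcond⟩⟩ := hB
    · exact absurd hy (by simp)
    · have hy2 : y = ⟨n / 2, by omega⟩ := (Sum.inl.inj hy).symm
      have hyv : (y : ℕ) = n / 2 := by rw [hy2]
      omega
  apply le_antisymm
  · exact Nat.sInf_le hupper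
  · apply le_csInf ⟨n / 2, hupper⟩
    intro t ht
    by_contra hlt
    push_neg at hlt
    exact hlow t hlt ht
end

section
/- Let n ≥ 3 be odd and S a minimum size P3-hull set of the prism graph G(n,1). Then for each i with 0 ≤ i ≤ (n−1)/2, after suitable relabeling of indices, the set {u_{2i}, v_{2i}} contains exactly one element of S, and no two elements of S are adjacent. -/
open SimpleGraph
open Fin.NatCast

namespace Stmt13Aux

open Sum
open Fin.CommRing

lemma closed_not_hull {V : Type*} (G : SimpleGraph V) (S D : Set V) (hne : D.Nonempty)
    (hdisj : ∀ v ∈ D, v ∉ S)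
    (hcl : ∀ v ∈ D, ∀ a b, G.Adj v a → G.Adj v b → a ∉ D → b ∉ D → a = b) :
    ¬ IsHullSet G S := by
  have key : ∀ p, ∀ v ∈ D, v ∉ infectIter G S p := by
    intro p
    induction p with
    | zero => exact hdisj
    | succ p ih =>
      intro v hv hmem
      rcases hmem with h | ⟨a, b, hab, ha, hb, hva, hvb⟩
      · exact ih v hv h
      · exact hab (hcl v hv a b hva hvb (fun hA => ih a hA ha) (fun hB => ih b hB hb))
  rintro ⟨p, hp⟩
  obtain ⟨v, hv⟩ := hne
  exact key p v hv (hp ▸ Set.mem_univ v)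

variable {n : ℕ} [NeZero n]

lemma fin_one_ne_zero (hn : 3 ≤ n) : (1 : Fin n) ≠ 0 := by
  simp [Fin.ext_iff]; omega

lemma adj_ll (hn : 3 ≤ n) (i j : Fin n) :
    (genPetersen n 1).Adj (inl i) (inl j) ↔ (j = i + 1 ∨ i = j + 1) := by
  have h1 := fin_one_ne_zero hn
  rw [genPetersen, SimpleGraph.fromRel_adj]
  constructor
  · rintro ⟨-, h | h⟩ <;> simp_all
  · rintro (h | h) <;> subst h <;> simp [h1]

lemma adj_rr (hn : 3 ≤ n) (i j : Fin n) :
    (genPetersen n 1).Adj (inr i) (inr j) ↔ (j = i + 1 ∨ i = j + 1) := by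
  have h1 := fin_one_ne_zero hn
  rw [genPetersen, SimpleGraph.fromRel_adj]
  constructor
  · rintro ⟨-, h | h⟩ <;> simp_all
  · rintro (h | h) <;> subst h <;> simp [h1]

lemma adj_lr (hn : 3 ≤ n) (i j : Fin n) :
    (genPetersen n 1).Adj (inl i) (inr j) ↔ i = j := by
  rw [genPetersen, SimpleGraph.fromRel_adj]
  constructor
  · rintro ⟨-, h | h⟩ <;> simp_all
  · rintro rfl; simp

lemma adj_rl (hn : 3 ≤ n) (i j : Fin n) :
    (genPetersen n 1).Adj (inr i) (inl j) ↔ j = i := by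
  rw [(genPetersen n 1).adj_comm, adj_lr hn]

lemma adj_nbr_l (hn : 3 ≤ n) (i : Fin n) (y : Fin n ⊕ Fin n) :
    (genPetersen n 1).Adj (inl i) y ↔ y = inl (i+1) ∨ y = inl (i-1) ∨ y = inr i := by
  cases y with
  | inl j =>
      rw [adj_ll hn]
      constructor
      · rintro (rfl | h)
        · simp
        · right; left; simp [h, eq_sub_iff_add_eq]
      · rintro (h | h | h) <;> simp_all [eq_sub_iff_add_eq]
  | inr j =>
      rw [adj_lr hn]; constructor
      · rintro rfl; simp
      · rintro (h|h|h) <;> simp_all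

lemma adj_nbr_r (hn : 3 ≤ n) (i : Fin n) (y : Fin n ⊕ Fin n) :
    (genPetersen n 1).Adj (inr i) y ↔ y = inr (i+1) ∨ y = inr (i-1) ∨ y = inl i := by
  cases y with
  | inr j =>
      rw [adj_rr hn]
      constructor
      · rintro (rfl | h)
        · simp
        · right; left; simp [h, eq_sub_iff_add_eq]
      · rintro (h | h | h) <;> simp_all [eq_sub_iff_add_eq]
  | inl j =>
      rw [(genPetersen n 1).adj_comm, adj_lr hn]; constructor
      · rintro rfl; simp
      · rintro (h|h|h) <;> simp_all

def vert (c : Bool) (j : Fin n) : Fin n ⊕ Fin n := cond c (inl j) (inr j)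

lemma adj_nbr_vert (hn : 3 ≤ n) (c : Bool) (j : Fin n) (y : Fin n ⊕ Fin n) :
    (genPetersen n 1).Adj (vert c j) y ↔
      y = vert c (j+1) ∨ y = vert c (j-1) ∨ y = vert (!c) j := by
  cases c <;> simp [vert, adj_nbr_l hn, adj_nbr_r hn]

lemma sameside_not_hull (hn : 3 ≤ n) (S : Set (Fin n ⊕ Fin n))
    (h1 : ∀ (c : Bool) (j : Fin n), vert c j ∈ S → vert (!c) j ∉ S)
    (hkey : ∀ (c : Bool) (j : Fin n), vert c j ∉ S → vert (!c) j ∈ S →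
       vert c (j-1) ∉ S ∧ vert c (j+1) ∉ S)
    (hocc : ∃ c j, vert c j ∈ S) : ¬ IsHullSet (genPetersen n 1) S := by
  set D : Set (Fin n ⊕ Fin n) :=
    {v | ∃ c j, v = vert c j ∧ v ∉ S ∧ (vert c (j-1) ∉ S ∨ vert c (j+1) ∉ S)} with hD
  apply closed_not_hull (genPetersen n 1) S D
  · obtain ⟨c, j, hc⟩ := hocc
    have hnc : vert (!c) j ∉ S := h1 c j hc
    have hcc : vert (!(!c)) j ∈ S := by rwa [Bool.not_not]
    obtain ⟨hL, hR⟩ := hkey (!c) j hnc hcc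
    exact ⟨vert (!c) j, ⟨!c, j, rfl, hnc, Or.inl hL⟩⟩
  · rintro v ⟨c, j, rfl, hvS, -⟩; exact hvS
  · rintro v ⟨c, j, rfl, hvS, hside⟩ a b hva hvb haD hbD
    rw [adj_nbr_vert hn] at hva hvb
    have hplus : vert c (j+1) ∉ S → vert c (j+1) ∈ D := fun h =>
      ⟨c, j+1, rfl, h, Or.inl (by simpa using hvS)⟩
    have hminus : vert c (j-1) ∉ S → vert c (j-1) ∈ D := fun h =>
      ⟨c, j-1, rfl, h, Or.inr (by simpa using hvS)⟩
    by_cases hl : vert c (j-1) ∈ S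
    · have hr : vert c (j+1) ∉ S := by
        rcases hside with h | h
        · exact absurd hl h
        · exact h
      have hoppS : vert (!c) j ∉ S := by
        intro h
        exact (hkey c j hvS h).1 hl
      have hopp : vert (!c) j ∈ D :=
        ⟨!c, j, rfl, hoppS, Or.inl (h1 c (j-1) hl)⟩
      have ha : a = vert c (j-1) := by
        rcases hva with h | h | h
        · exact absurd (h ▸ hplus hr) haD
        · exact h
        · exact absurd (h ▸ hopp) haD
      have hb : b = vert c (j-1) := by
        rcases hvb with h | h | h
        · exact absurd (h ▸ hplus hr) hbD
        · exact h
        · exact absurd (h ▸ hopp) hbD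
      rw [ha, hb]
    · by_cases hr : vert c (j+1) ∈ S
      · have hoppS : vert (!c) j ∉ S := by
          intro h
          exact (hkey c j hvS h).2 hr
        have hopp : vert (!c) j ∈ D :=
          ⟨!c, j, rfl, hoppS, Or.inr (h1 c (j+1) hr)⟩
        have ha : a = vert c (j+1) := by
          rcases hva with h | h | h
          · exact h
          · exact absurd (h ▸ hminus hl) haD
          · exact absurd (h ▸ hopp) haD
        have hb : b = vert c (j+1) := by
          rcases hvb with h | h | h
          · exact h
          · exact absurd (h ▸ hminus hl) hbD
          · exact absurd (h ▸ hopp) hbD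
        rw [ha, hb]
      · have ha : a = vert (!c) j := by
          rcases hva with h | h | h
          · exact absurd (h ▸ hplus hr) haD
          · exact absurd (h ▸ hminus hl) haD
          · exact h
        have hb : b = vert (!c) j := by
          rcases hvb with h | h | h
          · exact absurd (h ▸ hplus hr) hbD
          · exact absurd (h ▸ hminus hl) hbD
          · exact h
        rw [ha, hb]

lemma face_lemma (hn : 3 ≤ n) (S : Set (Fin n ⊕ Fin n))
    (hS : IsHullSet (genPetersen n 1) S) (j : Fin n)
    (e1 : inl j ∉ S) (e2 : inr j ∉ S) (e3 : inl (j+1) ∉ S) (e4 : inr (j+1) ∉ S) :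
    False := by
  set D : Set (Fin n ⊕ Fin n) := {inl j, inl (j+1), inr j, inr (j+1)} with hD
  refine closed_not_hull (genPetersen n 1) S D ⟨inl j, by simp [hD]⟩ ?_ ?_ hS
  · intro v hv
    rcases hv with h | h | h | h <;> subst h <;> assumption
  · intro v hv a b hva hvb haD hbD
    rcases hv with h | h | h | h <;> subst h
    · rw [adj_nbr_l hn] at hva hvb
      have ha : a = inl (j - 1) := by
        rcases hva with h | h | h
        · exact absurd (h ▸ (by simp [hD] : (inl (j+1) : Fin n ⊕ Fin n) ∈ D)) haD
        · exact h
        · exact absurd (h ▸ (by simp [hD] : (inr j : Fin n ⊕ Fin n) ∈ D)) haD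
      have hb : b = inl (j - 1) := by
        rcases hvb with h | h | h
        · exact absurd (h ▸ (by simp [hD] : (inl (j+1) : Fin n ⊕ Fin n) ∈ D)) hbD
        · exact h
        · exact absurd (h ▸ (by simp [hD] : (inr j : Fin n ⊕ Fin n) ∈ D)) hbD
      rw [ha, hb]
    · rw [adj_nbr_l hn] at hva hvb
      have ha : a = inl (j + 1 + 1) := by
        rcases hva with h | h | h
        · exact h
        · exact absurd (h ▸ (by simp [hD] : (inl (j+1-1) : Fin n ⊕ Fin n) ∈ D)) haD
        · exact absurd (h ▸ (by simp [hD] : (inr (j+1) : Fin n ⊕ Fin n) ∈ D)) haD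
      have hb : b = inl (j + 1 + 1) := by
        rcases hvb with h | h | h
        · exact h
        · exact absurd (h ▸ (by simp [hD] : (inl (j+1-1) : Fin n ⊕ Fin n) ∈ D)) hbD
        · exact absurd (h ▸ (by simp [hD] : (inr (j+1) : Fin n ⊕ Fin n) ∈ D)) hbD
      rw [ha, hb]
    · rw [adj_nbr_r hn] at hva hvb
      have ha : a = inr (j - 1) := by
        rcases hva with h | h | h
        · exact absurd (h ▸ (by simp [hD] : (inr (j+1) : Fin n ⊕ Fin n) ∈ D)) haD
        · exact h
        · exact absurd (h ▸ (by simp [hD] : (inl j : Fin n ⊕ Fin n) ∈ D)) haD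
      have hb : b = inr (j - 1) := by
        rcases hvb with h | h | h
        · exact absurd (h ▸ (by simp [hD] : (inr (j+1) : Fin n ⊕ Fin n) ∈ D)) hbD
        · exact h
        · exact absurd (h ▸ (by simp [hD] : (inl j : Fin n ⊕ Fin n) ∈ D)) hbD
      rw [ha, hb]
    · rw [adj_nbr_r hn] at hva hvb
      have ha : a = inr (j + 1 + 1) := by
        rcases hva with h | h | h
        · exact h
        · exact absurd (h ▸ (by simp [hD] : (inr (j+1-1) : Fin n ⊕ Fin n) ∈ D)) haD
        · exact absurd (h ▸ (by simp [hD] : (inl (j+1) : Fin n ⊕ Fin n) ∈ D)) haD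
      have hb : b = inr (j + 1 + 1) := by
        rcases hvb with h | h | h
        · exact h
        · exact absurd (h ▸ (by simp [hD] : (inr (j+1-1) : Fin n ⊕ Fin n) ∈ D)) hbD
        · exact absurd (h ▸ (by simp [hD] : (inl (j+1) : Fin n ⊕ Fin n) ∈ D)) hbD
      rw [ha, hb]

lemma O_structure (hn : 3 ≤ n) (hodd : Odd n) (S : Set (Fin n ⊕ Fin n))
    (hS : IsHullSet (genPetersen n 1) S) (hcard : S.ncard = (n + 1) / 2) :
    ∃ t : Fin n, (∀ j : Fin n, ¬(inl j ∈ S ∧ inr j ∈ S)) ∧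
      (∀ k : ℕ, k < n →
        ((inl ((k : Fin n) + t) ∈ S ∨ inr ((k : Fin n) + t) ∈ S) ↔ Even k)) := by
  classical
  obtain ⟨m, hm⟩ := hodd
  set O : Finset (Fin n) := Finset.univ.filter (fun j => inl j ∈ S ∨ inr j ∈ S) with hO
  have hmemO : ∀ j : Fin n, j ∈ O ↔ (inl j ∈ S ∨ inr j ∈ S) := by
    intro j; simp [hO]
  have hface : ∀ j : Fin n, j ∈ O ∨ j + 1 ∈ O := by
    intro j
    by_contra hc
    push_neg at hc
    rw [hmemO, hmemO] at hc
    push_neg at hc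
    exact face_lemma hn S hS j hc.1.1 hc.1.2 hc.2.1 hc.2.2
  have hScard : S.toFinset.card = (n + 1) / 2 := by
    rw [← Set.ncard_eq_toFinset_card']; exact hcard
  have himg : S.toFinset.image (Sum.elim id id) = O := by
    ext j
    simp only [Finset.mem_image, Set.mem_toFinset, hmemO]
    constructor
    · rintro ⟨a, ha, rfl⟩
      cases a with
      | inl i => exact Or.inl ha
      | inr i => exact Or.inr ha
    · rintro (h | h)
      · exact ⟨inl j, h, rfl⟩
      · exact ⟨inr j, h, rfl⟩
  have hOle : O.card ≤ (n + 1) / 2 := by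
    rw [← himg, ← hScard]; exact Finset.card_image_le
  set I : Finset (Fin n) := Oᶜ.image (· + 1) with hI
  have hIsub : I ⊆ O := by
    intro x hx
    obtain ⟨j, hj, rfl⟩ := Finset.mem_image.mp hx
    rw [Finset.mem_compl] at hj
    exact (hface j).resolve_left hj
  have hIcard : I.card = Oᶜ.card := Finset.card_image_of_injective _ (add_left_injective 1)
  have hOc : Oᶜ.card = n - O.card := by
    rw [Finset.card_compl, Fintype.card_fin]
  have hOcardtot : O.card ≤ n := by
    simpa using Finset.card_le_card (Finset.subset_univ O)
  have hOge : (n + 1) / 2 ≤ O.card := by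
    have := Finset.card_le_card hIsub
    omega
  have hOcard : O.card = (n + 1) / 2 := le_antisymm hOle hOge
  have hinj : Set.InjOn (Sum.elim id id) (S.toFinset : Set (Fin n ⊕ Fin n)) :=
    Finset.injOn_of_card_image_eq (by rw [himg, hOcard, hScard])
  have h1 : ∀ j : Fin n, ¬(inl j ∈ S ∧ inr j ∈ S) := by
    rintro j ⟨ha, hb⟩
    have : (inl j : Fin n ⊕ Fin n) = inr j :=
      hinj (by simpa using ha) (by simpa using hb) rfl
    simp at this
  have hOI : (O \ I).card = 1 := by
    rw [Finset.card_sdiff_of_subset hIsub]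
    omega
  obtain ⟨t, ht⟩ := Finset.card_eq_one.mp hOI
  have htO : t ∈ O := by
    have : t ∈ O \ I := ht ▸ Finset.mem_singleton_self t
    exact (Finset.mem_sdiff.mp this).1
  have htI : t ∉ I := by
    have : t ∈ O \ I := ht ▸ Finset.mem_singleton_self t
    exact (Finset.mem_sdiff.mp this).2
  have htpred : t - 1 ∈ O := by
    by_contra h
    exact htI (Finset.mem_image.mpr ⟨t - 1, Finset.mem_compl.mpr h, by ring⟩)
  have huniq : ∀ x ∈ O, x - 1 ∈ O → x = t := by
    intro x hx hx1
    have hxI : x ∉ I := by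
      intro hxI
      obtain ⟨j, hj, rfl⟩ := Finset.mem_image.mp hxI
      rw [Finset.mem_compl] at hj
      exact hj (by simpa using hx1)
    have : x ∈ O \ I := Finset.mem_sdiff.mpr ⟨hx, hxI⟩
    simpa [ht] using this
  have hchar : ∀ k : ℕ, k < n → (((k : Fin n) + t ∈ O) ↔ Even k) := by
    intro k
    induction k using Nat.strong_induction_on with
    | _ k ih =>
      intro hk
      match k with
      | 0 => simpa using htO
      | 1 =>
        constructor
        · intro h
          have h2 : ((1 : ℕ) : Fin n) + t - 1 ∈ O := by
            have : ((1 : ℕ) : Fin n) + t - 1 = t := by push_cast; ring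
            rw [this]; exact htO
          have := huniq _ h h2
          have h3 : ((1 : ℕ) : Fin n) = 0 := by
            have := add_right_cancel (this.trans (zero_add t).symm)
            exact this
          rw [Fin.natCast_eq_zero] at h3
          exact absurd (Nat.le_of_dvd one_pos h3) (by omega)
        · intro h; exact absurd h (by simp)
      | (k + 2) =>
        have ih1 := ih k (by omega) (by omega)
        have ih2 := ih (k + 1) (by omega) (by omega)
        by_cases he : Even k
        · have hodd1 : ¬ Even (k + 1) := by simp [Nat.even_add_one, he]
          have hno : ((k + 1 : ℕ) : Fin n) + t ∉ O := fun h => hodd1 (ih2.mp h)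
          have hmem : ((k + 2 : ℕ) : Fin n) + t ∈ O := by
            have := (hface (((k + 1 : ℕ) : Fin n) + t)).resolve_left hno
            have heq : ((k + 1 : ℕ) : Fin n) + t + 1 = ((k + 2 : ℕ) : Fin n) + t := by
              push_cast; ring
            rwa [heq] at this
          constructor
          · intro _; exact he.add even_two
          · intro _; exact hmem
        · have heven1 : Even (k + 1) := Nat.even_add_one.mpr he
          have hyes : ((k + 1 : ℕ) : Fin n) + t ∈ O := ih2.mpr heven1
          constructor
          · intro h
            have hpred : ((k + 2 : ℕ) : Fin n) + t - 1 ∈ O := by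
              have heq : ((k + 2 : ℕ) : Fin n) + t - 1 = ((k + 1 : ℕ) : Fin n) + t := by
                push_cast; ring
              rw [heq]; exact hyes
            have := huniq _ h hpred
            have h3 : ((k + 2 : ℕ) : Fin n) = 0 := add_right_cancel (this.trans (zero_add t).symm)
            rw [Fin.natCast_eq_zero] at h3
            have : n ≤ k + 2 := Nat.le_of_dvd (by omega) h3
            omega
          · intro h
            rcases h with ⟨r, hr⟩
            exact absurd ⟨r - 1, by omega⟩ he
  exact ⟨t, h1, fun k hk => by rw [← hmemO]; exact hchar k hk⟩

def rotIso (hn : 3 ≤ n) (r : Fin n) : genPetersen n 1 ≃g genPetersen n 1 where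
  toEquiv := Equiv.sumCongr (Equiv.addRight r) (Equiv.addRight r)
  map_rel_iff' := by
    intro x y
    have key : ∀ i j : Fin n, (j + r = i + r + 1 ∨ i + r = j + r + 1) ↔ (j = i + 1 ∨ i = j + 1) := by
      intro i j
      constructor <;> rintro (h | h)
      · left; exact add_right_cancel (by linear_combination h)
      · right; exact add_right_cancel (by linear_combination h)
      · left; linear_combination h
      · right; linear_combination h
    cases x <;> cases y <;>
      simp only [Equiv.sumCongr_apply, Sum.map_inl, Sum.map_inr, Equiv.coe_addRight,
        adj_ll hn, adj_rr hn, adj_lr hn, adj_rl hn, add_left_inj, key]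

end Stmt13Aux

theorem stmt13 (n : ℕ) [NeZero n] (hn : 3 ≤ n) (hodd : Odd n)
    (S : Set (Fin n ⊕ Fin n)) (hS : IsHullSet (genPetersen n 1) S)
    (hcard : S.ncard = (n + 1) / 2) :
    (∀ a ∈ S, ∀ b ∈ S, ¬ (genPetersen n 1).Adj a b) ∧
    ∃ φ : genPetersen n 1 ≃g genPetersen n 1,
      ∀ i : ℕ, i ≤ (n - 1) / 2 →
        Xor' (Sum.inl ((2 * i : ℕ) : Fin n) ∈ ⇑φ '' S)
             (Sum.inr ((2 * i : ℕ) : Fin n) ∈ ⇑φ '' S) := by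
  classical
  letI := Fin.instCommRing n
  open Sum Stmt13Aux in
  obtain ⟨t, h1, hcharS⟩ := Stmt13Aux.O_structure hn hodd S hS hcard
  obtain ⟨m, hm⟩ := hodd
  open Sum Stmt13Aux in
  -- basic vert facts
  have h1' : ∀ (c : Bool) (j : Fin n), vert c j ∈ S → vert (!c) j ∉ S := by
    intro c j hc hnc
    cases c
    · exact h1 j ⟨hnc, hc⟩
    · exact h1 j ⟨hc, hnc⟩
  open Sum Stmt13Aux in
  have hsameCol : ∀ (a b : Bool) (j : Fin n), vert a j ∈ S → vert b j ∈ S → a = b := by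
    intro a b j ha hb
    by_contra hne
    have hba : b = !a := by cases a <;> cases b <;> simp_all
    exact h1' a j ha (hba ▸ hb)
  open Sum Stmt13Aux in
  have hccS : ∀ (c : Bool) (j : Fin n), vert c j ∈ S → (inl j ∈ S ∨ inr j ∈ S) := by
    intro c j h
    cases c
    · exact Or.inr h
    · exact Or.inl h
  open Sum Stmt13Aux in
  have hunocc : ∀ k : ℕ, k < n → ¬ Even k → ∀ c : Bool, vert c ((k : Fin n) + t) ∉ S := by
    intro k hk hke c hc
    exact hke ((hcharS k hk).mp (hccS c _ hc))
  have hdec : ∀ j : Fin n, ∃ k : ℕ, k < n ∧ j = (k : Fin n) + t := by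
    intro j
    refine ⟨(j - t).val, (j - t).isLt, ?_⟩
    rw [Fin.cast_val_eq_self]
    ring
  open Sum Stmt13Aux in
  -- step A : no same-side pair on the adjacent occupied columns (t-1, t)
  have hopp : ∀ c : Bool, ¬(vert c (t - 1) ∈ S ∧ vert c t ∈ S) := by
    rintro c ⟨hA, hB⟩
    refine sameside_not_hull hn S h1' ?_ ⟨c, t, hB⟩ hS
    intro c' j hout hin
    obtain ⟨k, hk, rfl⟩ := hdec j
    have hkeven : Even k := (hcharS k hk).mp (hccS (!c') _ hin)
    constructor
    · -- column j - 1
      rcases Nat.eq_zero_or_pos k with hk0 | hkpos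
      · subst hk0
        have h0 : ((0 : ℕ) : Fin n) + t = t := by push_cast; ring
        rw [h0] at hin ⊢
        have hc' : (!c') = c := hsameCol (!c') c t hin hB
        have hcc' : c' = !c := by cases c <;> cases c' <;> simp_all
        rw [hcc']
        exact h1' c (t - 1) hA
      · have hk2 : 2 ≤ k := by
          rcases hkeven with ⟨r, hr⟩; omega
        have heq : ((k : ℕ) : Fin n) + t - 1 = ((k - 1 : ℕ) : Fin n) + t := by
          have hkk : k = (k - 1) + 1 := by omega
          rw [hkk]; push_cast; ring
        rw [heq]
        refine hunocc (k - 1) (by omega) ?_ c'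
        rcases hkeven with ⟨r, hr⟩
        rintro ⟨s, hs⟩
        omega
    · -- column j + 1
      rcases lt_or_ge (k + 1) n with hlt | hge
      · have heq : ((k : ℕ) : Fin n) + t + 1 = ((k + 1 : ℕ) : Fin n) + t := by
          push_cast; ring
        rw [heq]
        refine hunocc (k + 1) hlt ?_ c'
        simp [Nat.even_add_one, hkeven]
      · have hkn : k = n - 1 := by omega
        have heq : ((k : ℕ) : Fin n) + t + 1 = t := by
          have : ((k : ℕ) : Fin n) + 1 = ((k + 1 : ℕ) : Fin n) := by push_cast; ring
          have hn0 : ((k + 1 : ℕ) : Fin n) = 0 := by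
            rw [Fin.natCast_eq_zero]
            exact ⟨1, by omega⟩
          calc ((k : ℕ) : Fin n) + t + 1 = (((k : ℕ) : Fin n) + 1) + t := by ring
            _ = ((k + 1 : ℕ) : Fin n) + t := by rw [this]
            _ = t := by rw [hn0, zero_add]
        have heq2 : ((k : ℕ) : Fin n) + t = t - 1 := by
          rw [eq_sub_iff_add_eq, heq]
        rw [heq2] at hin
        rw [heq]
        have hc' : (!c') = c := hsameCol (!c') c (t - 1) hin hA
        have hcc' : c' = !c := by cases c <;> cases c' <;> simp_all
        rw [hcc']
        exact h1' c t hB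
  open Sum Stmt13Aux in
  -- step B : independence
  have hcyc : ∀ (c : Bool) (i : Fin n), vert c i ∈ S → vert c (i + 1) ∈ S → False := by
    intro c i hi hi1
    obtain ⟨k, hk, rfl⟩ := hdec i
    have hkeven : Even k := (hcharS k hk).mp (hccS c _ hi)
    rcases lt_or_ge (k + 1) n with hlt | hge
    · have heq : ((k : ℕ) : Fin n) + t + 1 = ((k + 1 : ℕ) : Fin n) + t := by
        push_cast; ring
      rw [heq] at hi1
      exact hunocc (k + 1) hlt (by simp [Nat.even_add_one, hkeven]) c hi1
    · have heq : ((k : ℕ) : Fin n) + t + 1 = t := by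
        have h2 : ((k : ℕ) : Fin n) + 1 = ((k + 1 : ℕ) : Fin n) := by push_cast; ring
        have hn0 : ((k + 1 : ℕ) : Fin n) = 0 := by
          rw [Fin.natCast_eq_zero]
          exact ⟨1, by omega⟩
        calc ((k : ℕ) : Fin n) + t + 1 = (((k : ℕ) : Fin n) + 1) + t := by ring
          _ = ((k + 1 : ℕ) : Fin n) + t := by rw [h2]
          _ = t := by rw [hn0, zero_add]
      have heq2 : ((k : ℕ) : Fin n) + t = t - 1 := by
        rw [eq_sub_iff_add_eq, heq]
      rw [heq2] at hi
      rw [heq] at hi1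
      exact hopp c ⟨hi, hi1⟩
  have hindep : ∀ a ∈ S, ∀ b ∈ S, ¬ (genPetersen n 1).Adj a b := by
    intro a ha b hb hadj
    open Sum Stmt13Aux in
    cases a with
    | inl i =>
      cases b with
      | inl j =>
        rw [adj_ll hn] at hadj
        rcases hadj with h | h
        · exact hcyc true i ha (h ▸ hb)
        · exact hcyc true j hb (h ▸ ha)
      | inr j =>
        rw [adj_lr hn] at hadj
        exact h1 j ⟨hadj ▸ ha, hb⟩
    | inr i =>
      cases b with
      | inl j =>
        rw [adj_rl hn] at hadj
        exact h1 i ⟨hadj ▸ hb, ha⟩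
      | inr j =>
        rw [adj_rr hn] at hadj
        rcases hadj with h | h
        · exact hcyc false i ha (h ▸ hb)
        · exact hcyc false j hb (h ▸ ha)
  refine ⟨hindep, Stmt13Aux.rotIso hn (-t), ?_⟩
  intro i hi
  open Sum Stmt13Aux in
  have h2i : 2 * i < n := by omega
  have hocc2 : inl (((2 * i : ℕ) : Fin n) + t) ∈ S ∨ inr (((2 * i : ℕ) : Fin n) + t) ∈ S :=
    (hcharS (2 * i) h2i).mpr ⟨i, by ring⟩
  have hnb := h1 (((2 * i : ℕ) : Fin n) + t)
  open Sum Stmt13Aux in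
  have himgl : ∀ x : Fin n, (inl x ∈ ⇑(rotIso hn (-t) : genPetersen n 1 ≃g genPetersen n 1) '' S) ↔ inl (x + t) ∈ S := by
    intro x
    constructor
    · rintro ⟨v, hv, hveq⟩
      cases v with
      | inl y =>
        have hy : y + -t = x := by
          simpa [rotIso, Equiv.sumCongr] using hveq
        have : y = x + t := by linear_combination hy
        rwa [this] at hv
      | inr y =>
        exact absurd hveq (by simp [rotIso, Equiv.sumCongr])
    · intro h
      exact ⟨inl (x + t), h, by simp [rotIso, Equiv.sumCongr]⟩
  open Sum Stmt13Aux in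
  have himgr : ∀ x : Fin n, (inr x ∈ ⇑(rotIso hn (-t) : genPetersen n 1 ≃g genPetersen n 1) '' S) ↔ inr (x + t) ∈ S := by
    intro x
    constructor
    · rintro ⟨v, hv, hveq⟩
      cases v with
      | inr y =>
        have hy : y + -t = x := by
          simpa [rotIso, Equiv.sumCongr] using hveq
        have : y = x + t := by linear_combination hy
        rwa [this] at hv
      | inl y =>
        exact absurd hveq (by simp [rotIso, Equiv.sumCongr])
    · intro h
      exact ⟨inr (x + t), h, by simp [rotIso, Equiv.sumCongr]⟩
  rw [Xor']
  rw [himgl, himgr]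
  rcases hocc2 with h | h
  · exact Or.inl ⟨h, fun hr => hnb ⟨h, hr⟩⟩
  · exact Or.inr ⟨h, fun hl => hnb ⟨hl, h⟩⟩
end
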